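/- Let X be a compact Hausdorff abelian topological group, φ : ℤ^d → X a group homomorphism (defining the rotation action n·y = φ(n) + y), x ∈ X, and U ⊆ X an open neighborhood of x. Then N(x,U) = {n ∈ ℤ^d : φ(n) + x ∈ U} is a Bohr₀ set of ℤ^d. -/

import Mathlib

open scoped BigOperators

noncomputable section

/-- Distance from a real number to the nearest integer. -/
def torusNorm (x : ℝ) : ℝ := |x - round x|

/-- A subset `V ⊆ ℤ^d` is a Bohr₀ set if there are `k ≥ 1`, vectors `α₁, …, α_k ∈ ℝ^d`
and `ε > 0` such that every `n ∈ ℤ^d` with `‖n·αⱼ‖_𝕋 < ε` for all `j` belongs to `V`. -/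
def IsBohr0 (d : ℕ) (V : Set (Fin d → ℤ)) : Prop :=
  ∃ k : ℕ, 1 ≤ k ∧ ∃ α : Fin k → Fin d → ℝ, ∃ ε : ℝ, 0 < ε ∧
    ∀ n : Fin d → ℤ, (∀ j : Fin k, torusNorm (∑ i, (n i : ℝ) * α j i) < ε) → n ∈ V

/-- `R ⊆ ℤ^d` is a set of `ℤ^d`-Bohr recurrence if it meets every Bohr₀ set. -/
def IsBohrRecurrence (d : ℕ) (R : Set (Fin d → ℤ)) : Prop :=
  ∀ V : Set (Fin d → ℤ), IsBohr0 d V → (R ∩ V).Nonempty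

open Finset Complex Topology Filter

namespace BohrAux

lemma torusNorm_le (x : ℝ) (m : ℤ) : torusNorm x ≤ |x - m| := by
  rcases eq_or_ne m (round x) with rfl | hm
  · exact le_of_eq rfl
  · have h1 : torusNorm x ≤ 1/2 := abs_sub_round x
    have h2 : (1:ℝ) ≤ |(round x : ℝ) - m| := by
      have : round x - m ≠ 0 := sub_ne_zero.mpr (by exact_mod_cast (Ne.symm hm))
      have : (1:ℤ) ≤ |round x - m| := Int.one_le_abs this
      calc (1:ℝ) = ((1:ℤ):ℝ) := by norm_num
        _ ≤ ((|round x - m| : ℤ) : ℝ) := by exact_mod_cast this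
        _ = |(round x : ℝ) - m| := by push_cast [Int.cast_abs]; ring_nf
    have h3 : |(round x : ℝ) - m| ≤ |x - round x| + |x - m| := by
      calc |(round x : ℝ) - m| = |(x - m) - (x - round x)| := by ring_nf
        _ ≤ |x - m| + |x - round x| := abs_sub _ _
        _ = |x - round x| + |x - m| := by ring
    have : (1:ℝ) - 1/2 ≤ |x - m| := by
      have := le_trans h2 h3
      linarith [abs_sub_round x]
    linarith
  
lemma torusNorm_triangle (x y : ℝ) : torusNorm y ≤ torusNorm x + |y - x| := by
  calc torusNorm y ≤ |y - round x| := torusNorm_le y (round x)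
    _ = |(x - round x) + (y - x)| := by ring_nf
    _ ≤ |x - round x| + |y - x| := abs_add_le _ _

lemma torusNorm_nonneg (x : ℝ) : 0 ≤ torusNorm x := abs_nonneg _

lemma cos_nonneg_of_torusNorm (t : ℝ) (h : torusNorm t ≤ 1/4) :
    0 ≤ Real.cos (2 * Real.pi * t) := by
  have hper : Real.cos (2 * Real.pi * t) = Real.cos (2 * Real.pi * (t - round t)) := by
    have : 2 * Real.pi * t = 2 * Real.pi * (t - round t) + (round t : ℝ) * (2 * Real.pi) := by
      ring
    rw [this, Real.cos_add_int_mul_two_pi]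
  rw [hper]
  apply Real.cos_nonneg_of_mem_Icc
  constructor
  · have : |t - round t| ≤ 1/4 := h
    have h1 := abs_le.mp this
    nlinarith [Real.pi_pos]
  · have h1 := abs_le.mp h
    nlinarith [Real.pi_pos]

section Fourier

variable {M : ℕ} [NeZero M] {d : ℕ}

/-- `e(t)` : the standard character of `ZMod M` into `ℂ`. -/
def ee (t : ZMod M) : ℂ := ZMod.stdAddChar t

lemma ee_zero : ee (0 : ZMod M) = 1 := AddChar.map_zero_eq_one _
lemma ee_add (a b : ZMod M) : ee (a + b) = ee a * ee b := AddChar.map_add_eq_mul _ a b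
lemma abs_ee (t : ZMod M) : ‖ee t‖ = 1 := by
  rw [ee, ZMod.stdAddChar_apply]; exact Circle.norm_coe _
lemma normSq_ee (t : ZMod M) : Complex.normSq (ee t) = 1 := by
  rw [← Complex.sq_norm, abs_ee]; norm_num
lemma conj_ee (t : ZMod M) : (starRingEnd ℂ) (ee t) = ee (-t) := by
  have h1 : ee t * ee (-t) = 1 := by rw [← ee_add, add_neg_cancel, ee_zero]
  have h2 : ee t * (starRingEnd ℂ) (ee t) = 1 := by
    rw [Complex.mul_conj, normSq_ee]; norm_num
  have ht : ee t ≠ 0 := by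
    intro h; rw [h] at h1; simpa using h1
  exact mul_left_cancel₀ ht (h2.trans h1.symm)

lemma sum_ee_mul (c : ZMod M) (hc : c ≠ 0) : ∑ t : ZMod M, ee (c * t) = 0 := by
  have := AddChar.sum_eq_zero_of_ne_one (ZMod.isPrimitive_stdAddChar M hc)
  simpa [AddChar.mulShift_apply, ee] using this

/-- dot product on `(ZMod M)^d` -/
def dotp (ξ n : Fin d → ZMod M) : ZMod M := ∑ i, ξ i * n i

lemma dotp_comm (ξ n : Fin d → ZMod M) : dotp ξ n = dotp n ξ := by
  unfold dotp; exact Finset.sum_congr rfl fun i _ => mul_comm _ _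
lemma dotp_zero_left (n : Fin d → ZMod M) : dotp 0 n = 0 := by simp [dotp]
lemma dotp_add_right (ξ a b : Fin d → ZMod M) : dotp ξ (a + b) = dotp ξ a + dotp ξ b := by
  simp [dotp, mul_add, Finset.sum_add_distrib]
lemma dotp_neg_right (ξ a : Fin d → ZMod M) : dotp ξ (-a) = -dotp ξ a := by
  simp [dotp]
lemma dotp_sub_right (ξ a b : Fin d → ZMod M) : dotp ξ (a - b) = dotp ξ a - dotp ξ b := by
  rw [sub_eq_add_neg, dotp_add_right, dotp_neg_right, sub_eq_add_neg]

lemma ee_dotp (ξ n : Fin d → ZMod M) : ee (dotp ξ n) = ∏ i, ee (ξ i * n i) := by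
  unfold dotp
  induction (Finset.univ : Finset (Fin d)) using Finset.cons_induction with
  | empty => simp [ee_zero]
  | cons a s ha ih => rw [Finset.sum_cons, Finset.prod_cons, ee_add, ih]

lemma sum_ee_dotp (ξ : Fin d → ZMod M) :
    ∑ n : Fin d → ZMod M, ee (dotp ξ n) = if ξ = 0 then ((M : ℂ))^d else 0 := by
  classical
  calc ∑ n : Fin d → ZMod M, ee (dotp ξ n)
      = ∑ n : Fin d → ZMod M, ∏ i, ee (ξ i * n i) := by
        exact Finset.sum_congr rfl fun n _ => ee_dotp ξ n
    _ = ∏ i, ∑ t : ZMod M, ee (ξ i * t) := (Fintype.prod_sum (fun (i : Fin d) (t : ZMod M) => ee (ξ i * t))).symm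
    _ = if ξ = 0 then ((M : ℂ))^d else 0 := by
        by_cases h : ξ = 0
        · subst h; simp [ee_zero, Finset.card_univ]
        · rw [if_neg h]
          obtain ⟨i, hi⟩ : ∃ i, ξ i ≠ 0 := by
            by_contra hc; push_neg at hc; exact h (funext hc)
          exact Finset.prod_eq_zero (Finset.mem_univ i) (sum_ee_mul _ hi)

/-- Fourier transform on `(ZMod M)^d`. -/
def ft (f : (Fin d → ZMod M) → ℂ) (ξ : Fin d → ZMod M) : ℂ :=
  ∑ n, f n * ee (-(dotp ξ n))

/-- correlation -/
def corr (a b : (Fin d → ZMod M) → ℂ) (y : Fin d → ZMod M) : ℂ :=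
  ∑ u, a u * (starRingEnd ℂ) (b (u - y))

lemma inversion (h : (Fin d → ZMod M) → ℂ) (z : Fin d → ZMod M) :
    ∑ ξ, ft h ξ * ee (dotp ξ z) = ((M : ℂ))^d * h z := by
  classical
  have key : ∀ n : Fin d → ZMod M,
      ∑ ξ : Fin d → ZMod M, ee (-(dotp ξ n)) * ee (dotp ξ z)
        = if z - n = 0 then ((M : ℂ))^d else 0 := by
    intro n
    have : ∀ ξ : Fin d → ZMod M, ee (-(dotp ξ n)) * ee (dotp ξ z) = ee (dotp (z - n) ξ) := by
      intro ξ
      rw [← ee_add]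
      congr 1
      rw [dotp_comm (z - n) ξ, dotp_sub_right]
      ring
    rw [Finset.sum_congr rfl (fun ξ _ => this ξ), sum_ee_dotp]
  calc ∑ ξ, ft h ξ * ee (dotp ξ z)
      = ∑ ξ, ∑ n, h n * (ee (-(dotp ξ n)) * ee (dotp ξ z)) := by
        apply Finset.sum_congr rfl; intro ξ _
        rw [ft, Finset.sum_mul]
        exact Finset.sum_congr rfl fun n _ => by ring
    _ = ∑ n, ∑ ξ, h n * (ee (-(dotp ξ n)) * ee (dotp ξ z)) := Finset.sum_comm
    _ = ∑ n, h n * (if z - n = 0 then ((M : ℂ))^d else 0) := by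
        apply Finset.sum_congr rfl; intro n _
        rw [← Finset.mul_sum, key n]
    _ = ((M : ℂ))^d * h z := by
        have : ∀ n ∈ Finset.univ, h n * (if z - n = 0 then ((M : ℂ))^d else 0)
            = h n * (if z = n then ((M : ℂ))^d else 0) := by
          intro n _
          congr 1
          simp [sub_eq_zero]
        rw [Finset.sum_congr rfl this]
        simp [Finset.sum_ite_eq, mul_comm]

lemma ft_corr (a b : (Fin d → ZMod M) → ℂ) (ξ : Fin d → ZMod M) :
    ft (corr a b) ξ = ft a ξ * (starRingEnd ℂ) (ft b ξ) := by
  classical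
  calc ft (corr a b) ξ
      = ∑ y, ∑ u, a u * (starRingEnd ℂ) (b (u - y)) * ee (-(dotp ξ y)) := by
        apply Finset.sum_congr rfl; intro y _
        rw [corr, Finset.sum_mul]
    _ = ∑ u, ∑ y, a u * (starRingEnd ℂ) (b (u - y)) * ee (-(dotp ξ y)) := Finset.sum_comm
    _ = ∑ u, ∑ t, a u * (starRingEnd ℂ) (b t) * ee (-(dotp ξ (u - t))) := by
        apply Finset.sum_congr rfl; intro u _
        exact Fintype.sum_equiv (Equiv.subLeft u) _ _ (fun y => by
          simp [Equiv.subLeft])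
    _ = ∑ u, ∑ t, (a u * ee (-(dotp ξ u))) *
          (starRingEnd ℂ) (b t * ee (-(dotp ξ t))) := by
        apply Finset.sum_congr rfl; intro u _
        apply Finset.sum_congr rfl; intro t _
        rw [map_mul, conj_ee]
        rw [dotp_sub_right]
        rw [show -(dotp ξ u - dotp ξ t) = -(dotp ξ u) + (- - (dotp ξ t)) by ring, ee_add]
        ring
    _ = ft a ξ * (starRingEnd ℂ) (ft b ξ) := by
        rw [ft, ft, map_sum, Finset.sum_mul_sum]

theorem bogolyubov_core (B : Finset (Fin d → ZMod M)) (δ : ℝ) (hδ0 : 0 < δ) (hδ1 : δ ≤ 1)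
    (hcard : δ * ((M:ℝ))^d ≤ B.card) :
    ∃ S : Finset (Fin d → ZMod M), ((S.card : ℝ) ≤ 2/δ^2 ∧ (∀ z : Fin d → ZMod M,
      (∀ ξ ∈ S, 0 ≤ (ee (dotp ξ z)).re) →
      ∃ a ∈ B, ∃ b ∈ B, ∃ c ∈ B, ∃ t ∈ B, z = a - b + c - t)) := by
  classical
  set f : (Fin d → ZMod M) → ℂ := fun n => if n ∈ B then (1:ℂ) else 0 with hf
  set T : ℝ := (B.card : ℝ) with hT
  have hMpos : (0:ℝ) < ((M:ℝ))^d := by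
    apply pow_pos; exact_mod_cast Nat.pos_of_ne_zero (NeZero.ne M)
  have hTpos : 0 < T := lt_of_lt_of_le (by positivity) hcard
  set q : (Fin d → ZMod M) → ℝ := fun ξ => Complex.normSq (ft f ξ) with hq
  have hqnonneg : ∀ ξ, 0 ≤ q ξ := fun ξ => Complex.normSq_nonneg _
  -- ft f 0 = T
  have hft0 : ft f 0 = (T : ℂ) := by
    rw [ft]
    have : ∀ n : Fin d → ZMod M, f n * ee (-(dotp 0 n)) = f n := by
      intro n; rw [dotp_zero_left, neg_zero, ee_zero, mul_one]
    rw [Finset.sum_congr rfl fun n _ => this n]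
    simp [hf, hT]
  -- basic: f n * conj (f n) = normSq, sum = T
  have hsumf : corr f f 0 = (T:ℂ) := by
    rw [corr]
    have : ∀ u : Fin d → ZMod M, f u * (starRingEnd ℂ) (f (u - 0)) =
        if u ∈ B then (1:ℂ) else 0 := by
      intro u; rw [sub_zero, hf]; by_cases h : u ∈ B <;> simp [h]
    rw [Finset.sum_congr rfl fun u _ => this u]
    simp [hT]
  set g := corr f f with hg
  have hftg : ∀ ξ, ft g ξ = ((q ξ : ℝ) : ℂ) := by
    intro ξ; rw [hg, ft_corr, Complex.mul_conj]
  -- Parseval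
  have parseval : ∑ ξ : Fin d → ZMod M, q ξ = ((M:ℝ))^d * T := by
    have h1 := inversion g 0
    have h2 : ∑ ξ : Fin d → ZMod M, ft g ξ * ee (dotp ξ 0) =
        ((∑ ξ : Fin d → ZMod M, q ξ : ℝ) : ℂ) := by
      push_cast
      apply Finset.sum_congr rfl; intro ξ _
      rw [hftg ξ, dotp_comm, dotp_zero_left, ee_zero, mul_one]
    rw [h2, hsumf] at h1
    exact_mod_cast h1
  set θ : ℝ := δ^2/2 * (((M:ℝ))^d * T) with hθ
  have hθpos : 0 < θ := by positivity
  set S : Finset (Fin d → ZMod M) := Finset.univ.filter (fun ξ => θ ≤ q ξ) with hS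
  refine ⟨S, ?_, ?_⟩
  · -- cardinality bound
    have h1 : θ * S.card ≤ ∑ ξ : Fin d → ZMod M, q ξ := by
      calc θ * S.card = ∑ _ξ ∈ S, θ := by rw [Finset.sum_const]; ring
        _ ≤ ∑ ξ ∈ S, q ξ := Finset.sum_le_sum (fun ξ hξ => (Finset.mem_filter.mp hξ).2)
        _ ≤ ∑ ξ : Fin d → ZMod M, q ξ :=
            Finset.sum_le_sum_of_subset_of_nonneg (Finset.subset_univ S)
              (fun ξ _ _ => hqnonneg ξ)
    rw [parseval] at h1
    rw [hθ] at h1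
    have hMd : (0:ℝ) < ((M:ℝ))^d * T := by positivity
    have hcs : (0:ℝ) ≤ (S.card : ℝ) := Nat.cast_nonneg _
    have h2 : δ^2/2 * (S.card : ℝ) ≤ 1 := by
      have h3 : (δ^2/2 * (S.card : ℝ) - 1) * (((M:ℝ))^d * T) ≤ 0 := by nlinarith
      nlinarith
    rw [le_div_iff₀ (by positivity : (0:ℝ) < δ^2)]
    linarith
  · intro z hz
    set R := corr g g with hR
    have hftR : ∀ ξ, ft R ξ = (((q ξ)^2 : ℝ) : ℂ) := by
      intro ξ
      rw [hR, ft_corr, hftg ξ, Complex.mul_conj, Complex.normSq_ofReal]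
      push_cast; ring
    have hinv := inversion R z
    have hre : (((M:ℂ))^d * R z).re = ∑ ξ : Fin d → ZMod M, (q ξ)^2 * (ee (dotp ξ z)).re := by
      rw [← hinv, Complex.re_sum]
      apply Finset.sum_congr rfl; intro ξ _
      rw [hftR ξ]
      rw [Complex.mul_re]
      simp [← Complex.ofReal_pow]
    -- lower bound
    have hsplit := Finset.sum_filter_add_sum_filter_not Finset.univ
      (fun ξ => θ ≤ q ξ) (fun ξ => (q ξ)^2 * (ee (dotp ξ z)).re)
    have hq0 : q 0 = T^2 := by
      rw [hq]; simp only []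
      rw [hft0, Complex.normSq_ofReal]; ring
    have h0S : (0 : Fin d → ZMod M) ∈ S := by
      rw [hS, Finset.mem_filter]
      refine ⟨Finset.mem_univ _, ?_⟩
      rw [hq0, hθ]
      have key : δ * ((M:ℝ))^d * T ≤ T * T := mul_le_mul_of_nonneg_right hcard hTpos.le
      nlinarith [key, hδ0, hδ1, hMpos, hTpos, mul_pos hMpos hTpos]
    have hSpart : T^4 ≤ ∑ ξ ∈ S, (q ξ)^2 * (ee (dotp ξ z)).re := by
      have hterm : (q 0)^2 * (ee (dotp (0 : Fin d → ZMod M) z)).re = T^4 := by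
        rw [hq0, dotp_zero_left, ee_zero]
        simp; ring
      calc T^4 = (q 0)^2 * (ee (dotp (0 : Fin d → ZMod M) z)).re := hterm.symm
        _ ≤ ∑ ξ ∈ S, (q ξ)^2 * (ee (dotp ξ z)).re := by
            apply Finset.single_le_sum (f := fun ξ => (q ξ)^2 * (ee (dotp ξ z)).re) ?_ h0S
            intro ξ hξ
            exact mul_nonneg (sq_nonneg _) (hz ξ hξ)
    have hNpart : -(θ * (((M:ℝ))^d * T)) ≤
        ∑ ξ ∈ Finset.univ.filter (fun ξ => ¬ θ ≤ q ξ), (q ξ)^2 * (ee (dotp ξ z)).re := by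
      have h1 : ∀ ξ ∈ Finset.univ.filter (fun ξ => ¬ θ ≤ q ξ),
          -(θ * q ξ) ≤ (q ξ)^2 * (ee (dotp ξ z)).re := by
        intro ξ hξ
        have hlt : q ξ < θ := lt_of_not_ge (Finset.mem_filter.mp hξ).2
        have habs : |(ee (dotp ξ z)).re| ≤ 1 := by
          calc |(ee (dotp ξ z)).re| ≤ ‖ee (dotp ξ z)‖ := Complex.abs_re_le_norm _
            _ = 1 := abs_ee _
        have hre1 : -1 ≤ (ee (dotp ξ z)).re := by
          have := abs_le.mp habs; exact this.1
        nlinarith [hqnonneg ξ, sq_nonneg (q ξ)]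
      calc -(θ * (((M:ℝ))^d * T)) = -(θ * (∑ ξ : Fin d → ZMod M, q ξ)) := by rw [parseval]
        _ ≤ -(θ * (∑ ξ ∈ Finset.univ.filter (fun ξ => ¬ θ ≤ q ξ), q ξ)) := by
            apply neg_le_neg
            apply mul_le_mul_of_nonneg_left ?_ (le_of_lt hθpos)
            exact Finset.sum_le_sum_of_subset_of_nonneg (Finset.filter_subset _ _)
              (fun ξ _ _ => hqnonneg ξ)
        _ = ∑ ξ ∈ Finset.univ.filter (fun ξ => ¬ θ ≤ q ξ), -(θ * q ξ) := by
            rw [Finset.mul_sum, neg_eq_iff_eq_neg, ← Finset.sum_neg_distrib]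
            simp
        _ ≤ _ := Finset.sum_le_sum h1
    have hlower : T^4 - θ * (((M:ℝ))^d * T) ≤ (((M:ℂ))^d * R z).re := by
      rw [hre, ← hsplit]
      have : (Finset.univ.filter (fun ξ : Fin d → ZMod M => θ ≤ q ξ)) = S := rfl
      rw [this]
      linarith
    have hpos : 0 < (((M:ℂ))^d * R z).re := by
      refine lt_of_lt_of_le ?_ hlower
      rw [hθ]
      have key2 : δ * ((M:ℝ))^d * (δ * ((M:ℝ))^d) ≤ T * T :=
        mul_le_mul hcard hcard (by positivity) hTpos.le
      nlinarith [key2, hTpos, hMpos, hδ0, mul_pos hTpos hTpos]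
    have hRz : R z ≠ 0 := by
      intro h
      rw [h, mul_zero] at hpos
      simp at hpos
    -- extract the quadruple
    obtain ⟨y, _, hy⟩ := Finset.exists_ne_zero_of_sum_ne_zero hRz
    have hgy : g y ≠ 0 := fun h => hy (by rw [h, zero_mul])
    have hgyz : g (y - z) ≠ 0 := fun h => hy (by rw [h, map_zero, mul_zero])
    obtain ⟨a, _, ha⟩ := Finset.exists_ne_zero_of_sum_ne_zero hgy
    obtain ⟨c, _, hc⟩ := Finset.exists_ne_zero_of_sum_ne_zero hgyz
    have hfmem : ∀ u : Fin d → ZMod M, f u ≠ 0 → u ∈ B := by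
      intro u hu
      by_contra h
      exact hu (by simp [hf, h])
    have haB : a ∈ B := hfmem a (fun h => ha (by rw [h, zero_mul]))
    have hbB : a - y ∈ B := hfmem _ (fun h => ha (by rw [h, map_zero, mul_zero]))
    have hcB : c ∈ B := hfmem c (fun h => hc (by rw [h, zero_mul]))
    have htB : c - (y - z) ∈ B := hfmem _ (fun h => hc (by rw [h, map_zero, mul_zero]))
    exact ⟨a, haB, a - y, hbB, c - (y - z), htB, c, hcB, by abel⟩

/-- reduction mod M -/
def redu (n : Fin d → ℤ) : Fin d → ZMod M := fun i => ((n i : ZMod M))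

lemma redu_sub (a b : Fin d → ℤ) : redu (M := M) (a - b) = redu a - redu b := by
  funext i; simp [redu]

lemma ee_intCast (m : ℤ) : ee ((m : ZMod M)) = Complex.exp (2 * Real.pi * I * m / M) :=
  ZMod.stdAddChar_coe m

lemma ee_intCast_re (m : ℤ) : (ee ((m : ZMod M))).re = Real.cos (2 * Real.pi * (m / M)) := by
  rw [ee_intCast]
  have : (2 * (Real.pi:ℂ) * I * m / M) = ((2 * Real.pi * ((m:ℝ) / M) : ℝ) : ℂ) * I := by
    push_cast; ring
  rw [this, Complex.exp_ofReal_mul_I_re]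

lemma dotp_redu (ξ : Fin d → ZMod M) (n : Fin d → ℤ) :
    dotp ξ (redu n) = (((∑ i, ((ξ i).val : ℤ) * n i : ℤ) : ZMod M)) := by
  rw [dotp]
  push_cast
  apply Finset.sum_congr rfl
  intro i _
  rw [ZMod.natCast_zmod_val]
  rfl

lemma re_ee_dotp_nonneg (ξ : Fin d → ZMod M) (n : Fin d → ℤ)
    (h : torusNorm (∑ i, (n i : ℝ) * (((ξ i).val : ℝ) / M)) ≤ 1/4) :
    0 ≤ (ee (dotp ξ (redu n))).re := by
  rw [dotp_redu, ee_intCast_re]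
  have hM : (0:ℝ) < M := by exact_mod_cast Nat.pos_of_ne_zero (NeZero.ne M)
  have heq : ((∑ i, ((ξ i).val : ℤ) * n i : ℤ) : ℝ) / M
      = ∑ i, (n i : ℝ) * (((ξ i).val : ℝ) / M) := by
    push_cast
    rw [Finset.sum_div]
    apply Finset.sum_congr rfl
    intro i _; ring
  rw [heq]
  exact cos_nonneg_of_torusNorm _ h

lemma redu_eq_zero (v : Fin d → ℤ) (hv : ∀ i, |v i| < (M:ℤ)) (h : redu (M := M) v = 0) :
    v = 0 := by
  funext i
  have h1 : ((v i : ZMod M)) = 0 := congrFun h i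
  have h2 : (M:ℤ) ∣ v i := (ZMod.intCast_zmod_eq_zero_iff_dvd _ _).mp h1
  exact Int.eq_zero_of_abs_lt_dvd h2 (hv i)

end Fourier

variable {d : ℕ}

lemma counting (A : Set (Fin d → ℤ)) [DecidablePred (· ∈ A)]
    (F : Finset (Fin d → ℤ)) (b : ℕ)
    (hFb : ∀ m ∈ F, ∀ i, |m i| ≤ (b:ℤ))
    (hcov : ∀ n : Fin d → ℤ, ∃ m ∈ F, (n - m) ∈ A)
    (N : ℕ) (hN : 2*b < N) :
    (N - 2*b) ^ d ≤ F.card *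
      ((Fintype.piFinset (fun _ : Fin d => Finset.Ico (0:ℤ) (N:ℤ))).filter (· ∈ A)).card := by
  classical
  set Q := Fintype.piFinset (fun _ : Fin d => Finset.Ico (0:ℤ) (N:ℤ)) with hQ
  set AQ := Q.filter (· ∈ A) with hAQ
  set Q' := Fintype.piFinset (fun _ : Fin d => Finset.Ico ((b:ℤ)) ((N:ℤ) - b)) with hQ'
  have hcardQ' : Q'.card = (N - 2*b) ^ d := by
    rw [hQ', Fintype.card_piFinset]
    have : ((N:ℤ) - b - b).toNat = N - 2*b := by omega
    simp only [Int.card_Ico]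
    rw [show ((N:ℤ) - b - (b:ℤ)).toNat = N - 2*b from by omega]
    simp [Finset.prod_const, Finset.card_univ]
  have hsub : Q' ⊆ F.biUnion (fun m => Q'.filter (fun n => (n - m) ∈ A)) := by
    intro n hn
    obtain ⟨m, hmF, hmA⟩ := hcov n
    exact Finset.mem_biUnion.mpr ⟨m, hmF, Finset.mem_filter.mpr ⟨hn, hmA⟩⟩
  have hper : ∀ m ∈ F, (Q'.filter (fun n => (n - m) ∈ A)).card ≤ AQ.card := by
    intro m hmF
    apply Finset.card_le_card_of_injOn (fun n => n - m)
    · intro n hn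
      rw [Finset.mem_coe, Finset.mem_filter] at hn
      obtain ⟨hnQ', hnA⟩ := hn
      rw [Finset.mem_coe, hAQ, Finset.mem_filter]
      refine ⟨?_, hnA⟩
      rw [hQ, Fintype.mem_piFinset]
      intro i
      rw [hQ', Fintype.mem_piFinset] at hnQ'
      have h1 := hnQ' i
      rw [Finset.mem_Ico] at h1 ⊢
      have h2 := hFb m hmF i
      rw [abs_le] at h2
      constructor
      · simp only [Pi.sub_apply]; omega
      · simp only [Pi.sub_apply]; omega
    · intro a _ c _ h
      simpa using congrArg (fun v => v + m) h
  calc (N - 2*b) ^ d = Q'.card := hcardQ'.symm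
    _ ≤ (F.biUnion (fun m => Q'.filter (fun n => (n - m) ∈ A))).card := Finset.card_le_card hsub
    _ ≤ ∑ m ∈ F, (Q'.filter (fun n => (n - m) ∈ A)).card := Finset.card_biUnion_le
    _ ≤ ∑ _m ∈ F, AQ.card := Finset.sum_le_sum hper
    _ = F.card * AQ.card := by rw [Finset.sum_const, smul_eq_mul]

lemma syndetic (X : Type*) [TopologicalSpace X] [AddCommGroup X] [IsTopologicalAddGroup X]
    [CompactSpace X] (φ : (Fin d → ℤ) →+ X) (W : Set X) (hW : W ∈ 𝓝 (0:X)) :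
    ∃ F : Finset (Fin d → ℤ), ∀ n : Fin d → ℤ, ∃ m ∈ F, φ (n - m) ∈ W := by
  classical
  obtain ⟨V, hV, hVadd⟩ := exists_nhds_zero_half hW
  have hnegV : (Neg.neg ⁻¹' V : Set X) ∈ 𝓝 (0:X) := by
    have : ContinuousAt (Neg.neg : X → X) 0 := continuous_neg.continuousAt
    have h0 : (Neg.neg (0:X)) = 0 := neg_zero
    exact this.preimage_mem_nhds (by rwa [h0])
  set W₂ : Set X := V ∩ (Neg.neg ⁻¹' V) with hW₂def
  have hW₂ : W₂ ∈ 𝓝 (0:X) := Filter.inter_mem hV hnegV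
  have hW₂sub : ∀ u ∈ W₂, ∀ v ∈ W₂, u - v ∈ W := by
    intro u hu v hv
    rw [sub_eq_add_neg]
    exact hVadd u hu.1 (-v) hv.2
  set O := interior W₂ with hO
  have hOopen : IsOpen O := isOpen_interior
  have h0O : (0:X) ∈ O := mem_interior_iff_mem_nhds.mpr hW₂
  set K := closure (Set.range φ) with hK
  have hKcomp : IsCompact K := isClosed_closure.isCompact
  set Us : X → Set X := fun g => (fun y => y - g) ⁻¹' O with hUs
  have hUopen : ∀ g, IsOpen (Us g) := fun g =>
    hOopen.preimage (continuous_id.sub continuous_const)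
  have hKU : K ⊆ ⋃ g, Us g := by
    intro y _
    exact Set.mem_iUnion.mpr ⟨y, by simp [hUs, h0O]⟩
  obtain ⟨t, ht⟩ := hKcomp.elim_finite_subcover Us hUopen hKU
  set P : X → Prop := fun g => ∃ m : Fin d → ℤ, φ m ∈ Us g with hP
  set pick : X → (Fin d → ℤ) := fun g => if h : P g then Classical.choose h else 0 with hpick
  refine ⟨(t.filter P).image pick, ?_⟩
  intro n
  have hn : φ n ∈ K := subset_closure ⟨n, rfl⟩
  obtain ⟨g, hg⟩ := Set.mem_iUnion₂.mp (ht hn)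
  obtain ⟨hgt, hng⟩ := hg
  have hPg : P g := ⟨n, hng⟩
  refine ⟨pick g, Finset.mem_image.mpr ⟨g, Finset.mem_filter.mpr ⟨hgt, hPg⟩, rfl⟩, ?_⟩
  have hmg : φ (pick g) ∈ Us g := by
    rw [hpick]; simp only [dif_pos hPg]; exact Classical.choose_spec hPg
  have h1 : φ n - g ∈ W₂ := interior_subset hng
  have h2 : φ (pick g) - g ∈ W₂ := interior_subset hmg
  have := hW₂sub _ h1 _ h2
  rw [map_sub]
  simpa using this

lemma stage (A : Set (Fin d → ℤ)) [DecidablePred (· ∈ A)]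
    (F : Finset (Fin d → ℤ)) (hFne : F.Nonempty) (b : ℕ)
    (hFb : ∀ m ∈ F, ∀ i, |m i| ≤ (b:ℤ))
    (hcov : ∀ n : Fin d → ℤ, ∃ m ∈ F, (n - m) ∈ A)
    (K : ℕ) (hK : 2 / ((1:ℝ)/(2*(F.card:ℝ)*4^d))^2 < K)
    (N : ℕ) (hN : 4*b*d + 2*b + 1 ≤ N) :
    ∃ α : Fin K → Fin d → ℝ, (∀ j i, α j i ∈ Set.Icc (0:ℝ) 1) ∧
      ∀ n : Fin d → ℤ, (∀ i, |n i| < (N:ℤ)) →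
        (∀ j, torusNorm (∑ i, (n i : ℝ) * α j i) ≤ 1/4) →
        ∃ a ∈ A, ∃ b' ∈ A, ∃ c ∈ A, ∃ t ∈ A, n = a - b' + c - t := by
  classical
  set r := F.card with hr
  have hrpos : 0 < r := Finset.card_pos.mpr hFne
  have hNpos : 0 < N := by omega
  set M := 4*N with hM
  haveI : NeZero M := ⟨by omega⟩
  set Q := Fintype.piFinset (fun _ : Fin d => Finset.Ico (0:ℤ) (N:ℤ)) with hQ
  set AQ := Q.filter (· ∈ A) with hAQ
  have hQmem : ∀ v ∈ AQ, ∀ i, 0 ≤ v i ∧ v i < (N:ℤ) := by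
    intro v hv i
    have := Fintype.mem_piFinset.mp (Finset.mem_filter.mp hv).1 i
    rw [Finset.mem_Ico] at this
    exact this
  set B := AQ.image (redu (M := M)) with hB
  have hBcard : B.card = AQ.card := by
    rw [hB]
    apply Finset.card_image_of_injOn
    intro a ha c hc hac
    have hz : redu (M := M) (a - c) = 0 := by
      funext i
      simp only [redu, Pi.sub_apply, Int.cast_sub, Pi.zero_apply]
      have : redu (M := M) a i = redu (M := M) c i := congrFun hac i
      simp only [redu] at this
      rw [this, sub_self]
    have := redu_eq_zero (M := M) (a - c) ?_ hz
    · funext i; have := congrFun this i; simpa [sub_eq_zero] using this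
    · intro i
      have h1 := hQmem a ha i
      have h2 := hQmem c hc i
      simp only [Pi.sub_apply]
      rw [abs_lt]
      omega
  -- density
  set δ : ℝ := 1/(2*r*4^d) with hδ
  have hδ0 : 0 < δ := by rw [hδ]; positivity
  have hδ1 : δ ≤ 1 := by
    rw [hδ]
    rw [div_le_one (by positivity)]
    have h1 : (1:ℝ) ≤ (r:ℝ) := by exact_mod_cast hrpos
    have h2 : (1:ℝ) ≤ (4:ℝ)^d := one_le_pow₀ (by norm_num)
    nlinarith
  have hcount := counting A F b hFb hcov N (by omega)
  have hbern : ((N:ℝ))^d ≤ 2 * ((N - 2*b : ℕ) : ℝ)^d := by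
    have h2b : 2*b ≤ N := by omega
    have hcast : ((N - 2*b : ℕ) : ℝ) = (N:ℝ) - 2*b := by
      push_cast [Nat.cast_sub h2b]; ring
    rw [hcast]
    have hNr : (0:ℝ) < N := by exact_mod_cast hNpos
    have hx : (-2:ℝ) ≤ -(2*b)/N := by
      rw [neg_div, neg_le_neg_iff]
      rw [div_le_iff₀ hNr]
      have : (2*b:ℝ) ≤ N := by exact_mod_cast h2b
      nlinarith
    have hb1 := one_add_mul_le_pow hx d
    have hval : (1:ℝ) + d * (-(2*b)/N) = 1 - 2*b*d/N := by ring
    have hhalf : (1:ℝ)/2 ≤ 1 - 2*(b:ℝ)*d/N := by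
      have h4 : (4*(b:ℝ)*d) ≤ N := by exact_mod_cast (by omega : 4*b*d ≤ N)
      have h5 : 2*(b:ℝ)*d/N ≤ 1/2 := by
        rw [div_le_iff₀ hNr]
        nlinarith
      linarith
    have hpow : ((N:ℝ) - 2*b)^d = (N:ℝ)^d * (1 + (-(2*b)/N))^d := by
      rw [← mul_pow]
      congr 1
      field_simp
      ring
    rw [hpow]
    have hNd : (0:ℝ) < (N:ℝ)^d := by positivity
    calc ((N:ℝ))^d = (N:ℝ)^d * 1 := by ring
      _ ≤ (N:ℝ)^d * (2 * (1 + (-(2*b)/N))^d) := by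
          apply mul_le_mul_of_nonneg_left ?_ hNd.le
          rw [hval] at hb1
          linarith
      _ = 2 * ((N:ℝ)^d * (1 + (-(2*b)/N))^d) := by ring
  have hcard : δ * ((M:ℝ))^d ≤ B.card := by
    rw [hBcard]
    have hc : ((N - 2*b : ℕ) : ℝ)^d ≤ (r:ℝ) * AQ.card := by
      have := hcount
      have hcast : (((N - 2*b)^d : ℕ) : ℝ) ≤ ((r * AQ.card : ℕ) : ℝ) := by exact_mod_cast this
      push_cast at hcast
      exact hcast
    have hMr : ((M:ℝ)) = 4*N := by rw [hM]; push_cast; ring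
    rw [hMr, hδ, mul_pow]
    rw [div_mul_eq_mul_div, one_mul, div_le_iff₀ (by positivity)]
    have hNd2 : ((N:ℝ))^d ≤ 2 * ((r:ℝ) * AQ.card) := le_trans hbern (by nlinarith)
    nlinarith [pow_pos (show (0:ℝ) < 4 by norm_num) d]
  obtain ⟨S, hScard, hSmain⟩ := bogolyubov_core (M := M) B δ hδ0 hδ1 hcard
  -- enumerate S by Fin K
  have hSK : S.card < K := by
    have : (2:ℝ)/δ^2 < K := by rw [hδ, hr]; exact hK
    have := lt_of_le_of_lt hScard this
    exact_mod_cast this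
  have hσ : ∀ ξ ∈ S, ∃ j : Fin K, S.toList.getD j 0 = ξ := by
    intro ξ hξ
    have hmem : ξ ∈ S.toList := Finset.mem_toList.mpr hξ
    have hidx : S.toList.idxOf ξ < S.toList.length := List.idxOf_lt_length_iff.mpr hmem
    have hlen : S.toList.length = S.card := Finset.length_toList S
    refine ⟨⟨S.toList.idxOf ξ, by omega⟩, ?_⟩
    rw [List.getD_eq_getElem _ _ (by simpa using hidx)]
    exact List.getElem_idxOf hidx
  refine ⟨fun j i => (((S.toList.getD j 0 i).val : ℝ)) / M, ?_, ?_⟩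
  · intro j i
    constructor
    · positivity
    · rw [div_le_one (by exact_mod_cast Nat.pos_of_ne_zero (NeZero.ne M))]
      exact_mod_cast (ZMod.val_lt _).le
  · intro n hn hbohr
    have hre : ∀ ξ ∈ S, 0 ≤ (ee (dotp ξ (redu (M := M) n))).re := by
      intro ξ hξ
      obtain ⟨j, hj⟩ := hσ ξ hξ
      apply re_ee_dotp_nonneg
      have h := hbohr j
      beta_reduce at h
      rw [hj] at h
      exact h
    obtain ⟨a', ha', b', hb', c', hc', t', ht', hzeq⟩ := hSmain (redu (M := M) n) hre
    obtain ⟨a, haAQ, haeq⟩ := Finset.mem_image.mp ha'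
    obtain ⟨b2, hbAQ, hbeq⟩ := Finset.mem_image.mp hb'
    obtain ⟨c, hcAQ, hceq⟩ := Finset.mem_image.mp hc'
    obtain ⟨t, htAQ, hteq⟩ := Finset.mem_image.mp ht'
    have hneq : n = a - b2 + c - t := by
      have hz : redu (M := M) (n - (a - b2 + c - t)) = 0 := by
        funext i
        simp only [redu, Pi.sub_apply, Pi.add_apply, Pi.zero_apply]
        push_cast
        have h1 : ((n i : ZMod M)) = a' i - b' i + c' i - t' i := by
          have := congrFun hzeq i
          simpa [redu] using this
        rw [h1, ← haeq, ← hbeq, ← hceq, ← hteq]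
        simp [redu]
      have := redu_eq_zero (M := M) _ ?_ hz
      · have h2 : ∀ i, n i - (a i - b2 i + c i - t i) = 0 := fun i => by
          have := congrFun this i; simpa using this
        funext i
        have := h2 i
        simp only [Pi.sub_apply, Pi.add_apply]
        omega
      · intro i
        have h1 := hQmem a haAQ i
        have h2 := hQmem b2 hbAQ i
        have h3 := hQmem c hcAQ i
        have h4 := hQmem t htAQ i
        have h5 := hn i
        rw [abs_lt] at h5 ⊢
        simp only [Pi.sub_apply, Pi.add_apply]
        omega
    exact ⟨a, (Finset.mem_filter.mp haAQ).2, b2, (Finset.mem_filter.mp hbAQ).2,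
      c, (Finset.mem_filter.mp hcAQ).2, t, (Finset.mem_filter.mp htAQ).2, hneq⟩


end BohrAux

open BohrAux in
theorem return_times_of_rotation_isBohr0
    (d : ℕ) (X : Type*) [TopologicalSpace X] [AddCommGroup X] [IsTopologicalAddGroup X]
    [CompactSpace X] [T2Space X]
    (φ : (Fin d → ℤ) →+ X) (x : X) (U : Set X) (hU : IsOpen U) (hxU : x ∈ U) :
    IsBohr0 d {n : Fin d → ℤ | φ n + x ∈ U} := by
  classical
  -- neighborhood setup
  have hUx : U ∈ 𝓝 x := hU.mem_nhds hxU
  have hW₀ : ((· + x) ⁻¹' U : Set X) ∈ 𝓝 (0:X) := by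
    have hc : ContinuousAt (fun y : X => y + x) 0 := by fun_prop
    exact hc.preimage_mem_nhds (by simpa using hUx)
  set W₀ : Set X := (· + x) ⁻¹' U with hW₀def
  obtain ⟨V₁, hV₁, hV₁add⟩ := exists_nhds_zero_half hW₀
  obtain ⟨V₂, hV₂, hV₂add⟩ := exists_nhds_zero_half hV₁
  have hnegV₂ : (Neg.neg ⁻¹' V₂ : Set X) ∈ 𝓝 (0:X) := by
    have hc : ContinuousAt (Neg.neg : X → X) 0 := continuous_neg.continuousAt
    exact hc.preimage_mem_nhds (by rwa [neg_zero])
  set W : Set X := V₂ ∩ (Neg.neg ⁻¹' V₂) with hWdef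
  have hW : W ∈ 𝓝 (0:X) := Filter.inter_mem hV₂ hnegV₂
  have hquad : ∀ w1 ∈ W, ∀ w2 ∈ W, ∀ w3 ∈ W, ∀ w4 ∈ W, w1 - w2 + w3 - w4 ∈ W₀ := by
    intro w1 h1 w2 h2 w3 h3 w4 h4
    have ha : w1 + (-w2) ∈ V₁ := hV₂add w1 h1.1 (-w2) h2.2
    have hb : w3 + (-w4) ∈ V₁ := hV₂add w3 h3.1 (-w4) h4.2
    have := hV₁add _ ha _ hb
    have heq : w1 + -w2 + (w3 + -w4) = w1 - w2 + w3 - w4 := by abel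
    rwa [heq] at this
  -- the return set to W
  set A : Set (Fin d → ℤ) := {n | φ n ∈ W} with hA
  obtain ⟨F₀, hF₀⟩ := syndetic X φ W hW
  have hFne : F₀.Nonempty := by
    obtain ⟨m, hm, _⟩ := hF₀ 0
    exact ⟨m, hm⟩
  have hcov : ∀ n : Fin d → ℤ, ∃ m ∈ F₀, (n - m) ∈ A := by
    intro n
    obtain ⟨m, hm, hmW⟩ := hF₀ n
    exact ⟨m, hm, hmW⟩
  obtain ⟨b, hFb⟩ : ∃ b : ℕ, ∀ m ∈ F₀, ∀ i, |m i| ≤ (b:ℤ) := by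
    refine ⟨F₀.sup (fun m => Finset.univ.sup (fun i => (m i).natAbs)), ?_⟩
    intro m hm i
    have h1 : (m i).natAbs ≤ Finset.univ.sup (fun i => (m i).natAbs) :=
      Finset.le_sup (f := fun i => (m i).natAbs) (Finset.mem_univ i)
    have h2 : Finset.univ.sup (fun i => (m i).natAbs) ≤
        F₀.sup (fun m => Finset.univ.sup (fun i => (m i).natAbs)) :=
      Finset.le_sup (f := fun m => Finset.univ.sup (fun i => (m i).natAbs)) hm
    rw [Int.abs_eq_natAbs]
    exact_mod_cast le_trans h1 h2
  obtain ⟨K, hK1, hK⟩ : ∃ K : ℕ, 1 ≤ K ∧ 2 / ((1:ℝ)/(2*(F₀.card:ℝ)*4^d))^2 < K := by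
    refine ⟨⌈2 / ((1:ℝ)/(2*(F₀.card:ℝ)*4^d))^2⌉₊ + 1, by omega, ?_⟩
    push_cast
    linarith [Nat.le_ceil (2 / ((1:ℝ)/(2*(F₀.card:ℝ)*4^d))^2)]
  -- per-scale frequencies
  have hstage : ∀ l : ℕ, ∃ α : Fin K → Fin d → ℝ,
      (∀ j i, α j i ∈ Set.Icc (0:ℝ) 1) ∧
      ∀ n : Fin d → ℤ, (∀ i, |n i| < ((4*b*d + 2*b + 1 + l : ℕ):ℤ)) →
        (∀ j, torusNorm (∑ i, (n i : ℝ) * α j i) ≤ 1/4) →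
        φ n + x ∈ U := by
    intro l
    obtain ⟨α, hα1, hα2⟩ := stage A F₀ hFne b hFb hcov K hK
      (4*b*d + 2*b + 1 + l) (by omega)
    refine ⟨α, hα1, ?_⟩
    intro n hn hbohr
    obtain ⟨a, ha, b', hb', c, hc, t, ht, hneq⟩ := hα2 n hn hbohr
    have hmem : φ n ∈ W₀ := by
      rw [hneq]
      have : φ (a - b' + c - t) = φ a - φ b' + φ c - φ t := by
        simp [map_add, map_sub]
      rw [this]
      exact hquad _ ha _ hb' _ hc _ ht
    exact hmem
  choose β hβ1 hβ2 using hstage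
  -- compactness
  set C : Set (Fin K → Fin d → ℝ) :=
    Set.pi Set.univ (fun _ => Set.pi Set.univ (fun _ => Set.Icc (0:ℝ) 1)) with hC
  have hCcomp : IsCompact C :=
    isCompact_univ_pi (fun _ => isCompact_univ_pi (fun _ => isCompact_Icc))
  have hβC : ∀ l, β l ∈ C := by
    intro l
    rw [hC, Set.mem_univ_pi]
    intro j
    rw [Set.mem_univ_pi]
    intro i
    exact hβ1 l j i
  obtain ⟨a, -, ψ, hψmono, hψtend⟩ := hCcomp.tendsto_subseq hβC
  refine ⟨K, hK1, a, 1/8, by norm_num, ?_⟩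
  intro n hbohr
  -- eventual closeness for each j
  have hev_all : ∀ᶠ l in atTop, ∀ j : Fin K,
      |(∑ i, (n i : ℝ) * β (ψ l) j i) - ∑ i, (n i : ℝ) * a j i| < 1/8 := by
    rw [Filter.eventually_all]
    intro j
    have htend : Filter.Tendsto (fun l => ∑ i, (n i : ℝ) * β (ψ l) j i) atTop
        (𝓝 (∑ i, (n i : ℝ) * a j i)) := by
      apply tendsto_finset_sum
      intro i _
      apply Filter.Tendsto.const_mul
      have h1 := tendsto_pi_nhds.mp hψtend j
      exact tendsto_pi_nhds.mp h1 i
    have hball : {y : ℝ | |y - ∑ i, (n i : ℝ) * a j i| < 1/8} ∈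
        𝓝 (∑ i, (n i : ℝ) * a j i) := by
      have := Metric.ball_mem_nhds (∑ i, (n i : ℝ) * a j i) (by norm_num : (0:ℝ) < 1/8)
      simpa [Metric.ball, Real.dist_eq] using this
    exact htend hball
  have hev_N : ∀ᶠ l in atTop, ∀ i, |n i| < ((4*b*d + 2*b + 1 + ψ l : ℕ):ℤ) := by
    set l₀ : ℕ := Finset.univ.sup (fun i => (n i).natAbs) with hl₀
    rw [eventually_atTop]
    refine ⟨l₀, fun l hl i => ?_⟩
    have h1 : (n i).natAbs ≤ l₀ := Finset.le_sup (f := fun i => (n i).natAbs) (Finset.mem_univ i)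
    have h2 : l₀ ≤ ψ l := le_trans hl (hψmono.le_apply)
    rw [Int.abs_eq_natAbs]
    have : (n i).natAbs < 4*b*d + 2*b + 1 + ψ l := by omega
    exact_mod_cast this
  obtain ⟨l, hl1, hl2⟩ := (hev_all.and hev_N).exists
  have hres := hβ2 (ψ l) n hl2
  apply hres
  intro j
  have h1 := hbohr j
  have h2 := hl1 j
  have := torusNorm_triangle (∑ i, (n i : ℝ) * a j i) (∑ i, (n i : ℝ) * β (ψ l) j i)
  have : torusNorm (∑ i, (n i : ℝ) * β (ψ l) j i) < 1/4 := by
    calc torusNorm (∑ i, (n i : ℝ) * β (ψ l) j i)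
        ≤ torusNorm (∑ i, (n i : ℝ) * a j i) +
          |(∑ i, (n i : ℝ) * β (ψ l) j i) - ∑ i, (n i : ℝ) * a j i| :=
          torusNorm_triangle _ _
      _ < 1/8 + 1/8 := by exact add_lt_add h1 h2
      _ = 1/4 := by norm_num
  exact this.le
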